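/- Suppose no two colluding agents are adjacent in G, fix a colluding agent x_0 ∈ C and a target t_0 ∉ C with t_0 ≠ x_0, and let β be the broadcast with β(x,t) = ρ*(x,t) for all (x,t) ≠ (x_0,t_0) and 1 ≤ β(x_0,t_0) < ρ*(x_0,t_0). Then β is not admissible: broadcasting strictly below ρ* necessarily causes a routing cycle, so some ordered pair of distinct vertices has no corresponding path. -/

import Mathlib

open SimpleGraph

namespace Intercept

variable {V : Type*}

/-- The perceived-distance vectors after `s` rounds of the synchronization protocol.
Colluding agents (members of `C`) always broadcast `β`; honest agents start with
`0`/`∞` and update by the distance-vector rule. -/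
noncomputable def perceived [Fintype V] [DecidableEq V] (G : SimpleGraph V)
    (C : Finset V) (β : V → V → ℕ∞) : ℕ → V → V → ℕ∞
  | 0 => fun i j => if i ∈ C then β i j else if i = j then 0 else ⊤
  | s + 1 => fun i j =>
      if i ∈ C then β i j
      else min (perceived G C β s i j)
        (1 + ⨅ k ∈ G.neighborSet i, perceived G C β s k j)

/-- The stationary perceived distances `ρ = ρ^n`. -/
noncomputable def rho [Fintype V] [DecidableEq V] (G : SimpleGraph V)
    (C : Finset V) (β : V → V → ℕ∞) : V → V → ℕ∞ :=
  perceived G C β (Fintype.card V)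

/-- `k ∈ b(i,t)`:  `k` is a neighbor of `i` minimizing the (stationary) perceived
distance `ρ(·,t)` among all neighbors of `i`; only defined (satisfiable) for `i ≠ t`. -/
def inForwardSet (G : SimpleGraph V) (ρ : V → V → ℕ∞) (i t k : V) : Prop :=
  i ≠ t ∧ G.Adj i k ∧ ∀ k', G.Adj i k' → ρ k t ≤ ρ k' t

/-- A corresponding path from `s` to `t`: a walk in `G` such that every honest vertex
forwards to a member of its forwarding set `b(·,t)`. -/
def IsCorrPath [Fintype V] [DecidableEq V] (G : SimpleGraph V) (C : Finset V)
    (β : V → V → ℕ∞) (s t : V) (ℓ : ℕ) (v : ℕ → V) : Prop :=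
  v 0 = s ∧ v ℓ = t ∧ (∀ i < ℓ, G.Adj (v i) (v (i + 1))) ∧
    ∀ i < ℓ, v i ∉ C → inForwardSet G (rho G C β) (v i) t (v (i + 1))

/-- A broadcast is admissible if between every ordered pair of distinct vertices
there is a corresponding path. -/
def Admissible [Fintype V] [DecidableEq V] (G : SimpleGraph V) (C : Finset V)
    (β : V → V → ℕ∞) : Prop :=
  ∀ s t : V, s ≠ t → ∃ ℓ v, IsCorrPath G C β s t ℓ v

/-- The pair `(s,t)` is captured if every corresponding path from `s` to `t`
contains a colluding vertex. -/
def Captured [Fintype V] [DecidableEq V] (G : SimpleGraph V) (C : Finset V)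
    (β : V → V → ℕ∞) (s t : V) : Prop :=
  ∀ ℓ v, IsCorrPath G C β s t ℓ v → ∃ i ≤ ℓ, v i ∈ C

/-- `N(C,β)`: the number of captured ordered pairs of distinct vertices. -/
noncomputable def numCaptured [Fintype V] [DecidableEq V] (G : SimpleGraph V)
    (C : Finset V) (β : V → V → ℕ∞) : ℕ :=
  Set.ncard {p : V × V | p.1 ≠ p.2 ∧ Captured G C β p.1 p.2}

/-- The `j`-th colluding distance `d_j(x,y)`: the least total length of a sequence of
`j` distinct colluding vertices starting at `x` and ending at `y`, measured by summing
the graph distances of consecutive members (`⊤` if no such sequence exists). -/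
noncomputable def collDist (G : SimpleGraph V) (C : Finset V) (j : ℕ) (x y : V) : ℕ∞ :=
  ⨅ (σ : ℕ → V) (_ : σ 0 = x ∧ σ (j - 1) = y ∧ (∀ i < j, σ i ∈ C) ∧
      ∀ a < j, ∀ b < j, σ a = σ b → a = b),
    ∑ i ∈ Finset.range (j - 1), (G.dist (σ i) (σ (i + 1)) : ℕ∞)

/-- `ρ'(x,t) = max (d(x,t) - 2) 1`. -/
noncomputable def rhoPrime (G : SimpleGraph V) (x t : V) : ℕ∞ :=
  max ((G.dist x t : ℕ∞) - 2) 1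

/-- `ρ''(x,t)`: the minimum over colluders `y` and `1 ≤ j ≤ |C|` of
`d_j(x,y) - 2(j-1) + ρ'(y,t)`. -/
noncomputable def rhoPrime2 (G : SimpleGraph V) (C : Finset V) (x t : V) : ℕ∞ :=
  ⨅ y ∈ C, ⨅ j ∈ Finset.Icc 1 C.card,
    (collDist G C j x y - ((2 * (j - 1) : ℕ) : ℕ∞) + rhoPrime G y t)

/-- The optimal separated broadcast `ρ*(x,t) = min (ρ'(x,t)) (ρ''(x,t))`,
with `ρ*(x,x) = 0`. -/
noncomputable def rhoStar [DecidableEq V] (G : SimpleGraph V) (C : Finset V)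
    (x t : V) : ℕ∞ :=
  if x = t then 0 else min (rhoPrime G x t) (rhoPrime2 G C x t)

/-- A colluder `x` is proper for target `t` if `ρ*(x,t) < ρ'(x,t)`. -/
def Proper [DecidableEq V] (G : SimpleGraph V) (C : Finset V) (x t : V) : Prop :=
  rhoStar G C x t < rhoPrime G x t

open scoped Classical in
/-- The forwarding number of `x` for `t`: the least `j ≥ 1` such that
`ρ*(x,t) = d_j(x,y) - 2(j-1) + ρ'(y,t)` for some colluder `y`, improper
vertices being assigned forwarding number `1`. -/
noncomputable def fwdNum [DecidableEq V] (G : SimpleGraph V) (C : Finset V)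
    (x t : V) : ℕ :=
  if Proper G C x t then
    sInf {j : ℕ | 1 ≤ j ∧ ∃ y ∈ C, rhoStar G C x t =
      collDist G C j x y - ((2 * (j - 1) : ℕ) : ℕ∞) + rhoPrime G y t}
  else 1



section AuxLemmas

variable {G : SimpleGraph V} {C : Finset V}

lemma perceived_colluder [Fintype V] [DecidableEq V] (β : V → V → ℕ∞) (s : ℕ) {i : V}
    (hi : i ∈ C) (j : V) : perceived G C β s i j = β i j := by
  cases s <;> simp [perceived, hi]

lemma perceived_lower [Fintype V] [DecidableEq V] (hG : G.Connected) (β : V → V → ℕ∞)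
    (t : V) (s : ℕ) (i : V) :
    min ((G.dist i t : ℕ∞)) (⨅ c ∈ C, ((G.dist i c : ℕ∞) + β c t)) ≤ perceived G C β s i t := by
  induction s generalizing i with
  | zero =>
    by_cases hi : i ∈ C
    · rw [perceived_colluder β 0 hi]
      refine (min_le_right _ _).trans ((iInf₂_le i hi).trans ?_)
      simp [SimpleGraph.dist_self]
    · simp only [perceived, hi, if_false]
      split
      · rename_i h
        subst h
        exact (min_le_left _ _).trans (by simp)
      · exact le_top
  | succ s IH =>
    by_cases hi : i ∈ C
    · rw [perceived_colluder β (s+1) hi]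
      refine (min_le_right _ _).trans ((iInf₂_le i hi).trans ?_)
      simp [SimpleGraph.dist_self]
    · have hstep : perceived G C β (s+1) i t = min (perceived G C β s i t)
          (1 + ⨅ k ∈ G.neighborSet i, perceived G C β s k t) := by
        simp [perceived, hi]
      rw [hstep]
      refine le_min (IH i) ?_
      have key : ∀ k, G.Adj i k →
          min ((G.dist i t : ℕ∞)) (⨅ c ∈ C, ((G.dist i c : ℕ∞) + β c t))
            ≤ 1 + perceived G C β s k t := by
        intro k hadj
        have hdik : G.dist i k = 1 := dist_eq_one_iff_adj.mpr hadj
        by_cases hkC : k ∈ C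
        · rw [perceived_colluder β s hkC]
          refine (min_le_right _ _).trans ((iInf₂_le k hkC).trans ?_)
          rw [hdik]
          simp
        · refine le_trans ?_ (add_le_add_right (IH k) 1)
          rcases min_cases ((G.dist k t : ℕ∞)) (⨅ c ∈ C, ((G.dist k c : ℕ∞) + β c t)) with
            ⟨hm, _⟩ | ⟨hm, _⟩ <;> rw [hm]
          · refine (min_le_left _ _).trans ?_
            have : G.dist i t ≤ 1 + G.dist k t := by
              have := hG.dist_triangle (u := i) (v := k) (w := t)
              omega
            exact_mod_cast Nat.cast_le.mpr this
          · refine (min_le_right _ _).trans ?_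
            rw [← Finset.inf_eq_iInf, ← Finset.inf_eq_iInf]
            rcases C.eq_empty_or_nonempty with rfl | hne
            · simp
            · obtain ⟨c₀, hc₀, heq⟩ := Finset.exists_mem_eq_inf C hne
                (fun c => (G.dist k c : ℕ∞) + β c t)
              rw [heq]
              refine (Finset.inf_le hc₀).trans ?_
              have : G.dist i c₀ ≤ 1 + G.dist k c₀ := by
                have := hG.dist_triangle (u := i) (v := k) (w := c₀)
                omega
              calc ((G.dist i c₀ : ℕ∞)) + β c₀ t
                  ≤ (1 + (G.dist k c₀ : ℕ∞)) + β c₀ t := by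
                    refine add_le_add_left ?_ _
                    exact_mod_cast Nat.cast_le.mpr this
                _ = 1 + ((G.dist k c₀ : ℕ∞) + β c₀ t) := by ring
      set X := ⨅ k ∈ G.neighborSet i, perceived G C β s k t with hX
      rcases eq_or_ne X ⊤ with h | h
      · rw [h]
        simp
      · have hlt : X < X + 1 := (ENat.lt_add_one_iff h).mpr le_rfl
        obtain ⟨k, hk⟩ := iInf_lt_iff.mp hlt
        obtain ⟨hkmem, hklt⟩ := iInf_lt_iff.mp hk
        have hkX : perceived G C β s k t ≤ X := (ENat.lt_add_one_iff h).mp hklt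
        exact (key k hkmem).trans (add_le_add_right hkX 1)

lemma two_le_dist_colluders (hG : G.Connected) (hsep : ∀ x ∈ C, ∀ y ∈ C, ¬ G.Adj x y)
    {x y : V} (hx : x ∈ C) (hy : y ∈ C) (hxy : x ≠ y) : 2 ≤ G.dist x y := by
  have h1 : 0 < G.dist x y := hG.pos_dist_of_ne hxy
  have h2 : G.dist x y ≠ 1 := fun h => hsep x hx y hy (dist_eq_one_iff_adj.mp h)
  omega

lemma collDist_le (j : ℕ) (x y : V) (σ : ℕ → V)
    (h : σ 0 = x ∧ σ (j - 1) = y ∧ (∀ i < j, σ i ∈ C) ∧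
      ∀ a < j, ∀ b < j, σ a = σ b → a = b) :
    collDist G C j x y ≤ ∑ i ∈ Finset.range (j - 1), (G.dist (σ i) (σ (i + 1)) : ℕ∞) :=
  iInf_le_of_le σ (iInf_le _ h)

lemma collDist_exists {j : ℕ} {x y : V} (h : collDist G C j x y ≠ ⊤) :
    ∃ σ : ℕ → V, (σ 0 = x ∧ σ (j - 1) = y ∧ (∀ i < j, σ i ∈ C) ∧
        ∀ a < j, ∀ b < j, σ a = σ b → a = b) ∧
      ∑ i ∈ Finset.range (j - 1), (G.dist (σ i) (σ (i + 1)) : ℕ∞) ≤ collDist G C j x y := by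
  have h1 : collDist G C j x y < collDist G C j x y + 1 := (ENat.lt_add_one_iff h).mpr le_rfl
  obtain ⟨σ, hσ⟩ := iInf_lt_iff.mp h1
  obtain ⟨hp, hs⟩ := iInf_lt_iff.mp hσ
  exact ⟨σ, hp, (ENat.lt_add_one_iff h).mp hs⟩

lemma rhoPrime2_le_term [DecidableEq V] (hG : G.Connected)
    (hsep : ∀ x ∈ C, ∀ y ∈ C, ¬ G.Adj x y)
    {x c : V} (hx : x ∈ C) (hc : c ∈ C) (hcx : c ≠ x) (t : V) {y : V} (hy : y ∈ C)
    {j : ℕ} (hj1 : 1 ≤ j) (hj2 : j ≤ C.card) :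
    rhoPrime2 G C x t ≤ (G.dist x c : ℕ∞) - 2 +
      (collDist G C j c y - ((2 * (j - 1) : ℕ) : ℕ∞) + rhoPrime G y t) := by
  by_cases htop : collDist G C j c y = ⊤
  · rw [htop]
    rw [ENat.top_sub_coe, top_add, add_top]
    exact le_top
  obtain ⟨σ, ⟨hσ0, hσy, hσmem, hσinj⟩, hS⟩ := collDist_exists htop
  set S : ℕ := ∑ i ∈ Finset.range (j - 1), G.dist (σ i) (σ (i + 1)) with hSdef
  have hScast : ((S : ℕ∞)) = ∑ i ∈ Finset.range (j - 1), (G.dist (σ i) (σ (i + 1)) : ℕ∞) := by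
    rw [hSdef]; push_cast; rfl
  have hS' : (S : ℕ∞) ≤ collDist G C j c y := hScast ▸ hS
  have hedge : ∀ i, i < j - 1 → 2 ≤ G.dist (σ i) (σ (i + 1)) := by
    intro i hi
    have hii : i < j := by omega
    have hi1 : i + 1 < j := by omega
    have hne : σ i ≠ σ (i + 1) := fun h => by
      have := hσinj i hii (i + 1) hi1 h; omega
    exact two_le_dist_colluders hG hsep (hσmem i hii) (hσmem (i + 1) hi1) hne
  have h2j : 2 * (j - 1) ≤ S := by
    rw [hSdef]
    calc 2 * (j - 1) = ∑ _i ∈ Finset.range (j - 1), 2 := by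
          simp [Finset.sum_const, Finset.card_range, mul_comm]
      _ ≤ _ := Finset.sum_le_sum (fun i hi => hedge i (Finset.mem_range.mp hi))
  have hd2 : 2 ≤ G.dist x c :=
    two_le_dist_colluders hG hsep hx hc (fun h => hcx h.symm)
  have final : ∀ (j' : ℕ) (S₂ : ℕ), 1 ≤ j' → j' ≤ C.card →
      collDist G C j' x y ≤ (S₂ : ℕ∞) →
      S₂ - 2 * (j' - 1) ≤ (G.dist x c - 2) + (S - 2 * (j - 1)) →
      rhoPrime2 G C x t ≤ (G.dist x c : ℕ∞) - 2 +
        (collDist G C j c y - ((2 * (j - 1) : ℕ) : ℕ∞) + rhoPrime G y t) := by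
    intro j' S₂ hj'1 hj'2 hcoll hnat
    have step1 : rhoPrime2 G C x t ≤
        collDist G C j' x y - ((2 * (j' - 1) : ℕ) : ℕ∞) + rhoPrime G y t :=
      le_trans (iInf₂_le y hy) (iInf₂_le j' (Finset.mem_Icc.mpr ⟨hj'1, hj'2⟩))
    refine step1.trans ?_
    have lhs_le : collDist G C j' x y - ((2 * (j' - 1) : ℕ) : ℕ∞) + rhoPrime G y t ≤
        (((S₂ - 2 * (j' - 1) : ℕ)) : ℕ∞) + rhoPrime G y t := by
      refine add_le_add_left ?_ _
      rw [ENat.coe_sub]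
      exact tsub_le_tsub_right hcoll _
    refine lhs_le.trans ?_
    have rhs_ge : ((((G.dist x c - 2) + (S - 2 * (j - 1)) : ℕ)) : ℕ∞) + rhoPrime G y t ≤
        (G.dist x c : ℕ∞) - 2 +
          (collDist G C j c y - ((2 * (j - 1) : ℕ) : ℕ∞) + rhoPrime G y t) := by
      have : ((((G.dist x c - 2) + (S - 2 * (j - 1)) : ℕ)) : ℕ∞) =
          ((G.dist x c : ℕ∞) - 2) + (((S - 2 * (j - 1) : ℕ)) : ℕ∞) := by
        push_cast [ENat.coe_sub]
        norm_num
      rw [this, add_assoc]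
      refine add_le_add_right (add_le_add_left ?_ _) _
      rw [ENat.coe_sub]
      exact tsub_le_tsub_right hS' _
    refine le_trans ?_ rhs_ge
    exact add_le_add_left (by exact_mod_cast Nat.cast_le.mpr hnat) _
  by_cases hxin : ∃ p, p < j ∧ σ p = x
  · obtain ⟨p, hpj, hpx⟩ := hxin
    have hp0 : p ≠ 0 := by
      intro h
      apply hcx
      rw [← hσ0, ← hpx, h]
    set j' := j - p with hj'def
    set τ : ℕ → V := fun i => σ (p + i) with hτ
    have hprop : τ 0 = x ∧ τ (j' - 1) = y ∧ (∀ i < j', τ i ∈ C) ∧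
        ∀ a < j', ∀ b < j', τ a = τ b → a = b := by
      refine ⟨by simp [hτ, hpx], ?_, ?_, ?_⟩
      · show σ (p + (j' - 1)) = y
        have : p + (j' - 1) = j - 1 := by omega
        rw [this, hσy]
      · intro i hi; exact hσmem _ (by omega)
      · intro a ha b hb hab
        have := hσinj (p + a) (by omega) (p + b) (by omega) hab
        omega
    set S₂ : ℕ := ∑ i ∈ Finset.range (j' - 1), G.dist (σ (p + i)) (σ (p + i + 1)) with hS₂def
    have hcoll : collDist G C j' x y ≤ (S₂ : ℕ∞) := by
      refine (collDist_le j' x y τ hprop).trans_eq ?_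
      rw [hS₂def]; push_cast; rfl
    have hsplit : S₂ + 2 * p ≤ S := by
      have hj1' : j - 1 = p + (j' - 1) := by omega
      have hSsum : S = (∑ i ∈ Finset.range p, G.dist (σ i) (σ (i + 1))) + S₂ := by
        rw [hSdef, hj1', Finset.sum_range_add, hS₂def]
      have h2p : 2 * p ≤ ∑ i ∈ Finset.range p, G.dist (σ i) (σ (i + 1)) := by
        calc 2 * p = ∑ _i ∈ Finset.range p, 2 := by
              simp [Finset.sum_const, Finset.card_range, mul_comm]
          _ ≤ _ := Finset.sum_le_sum (fun i hi => hedge i (by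
              have := Finset.mem_range.mp hi; omega))
      omega
    exact final j' S₂ (by omega) (by omega) hcoll (by omega)
  · push_neg at hxin
    set τ : ℕ → V := fun i => if i = 0 then x else σ (i - 1) with hτ
    have hprop : τ 0 = x ∧ τ ((j + 1) - 1) = y ∧ (∀ i < j + 1, τ i ∈ C) ∧
        ∀ a < j + 1, ∀ b < j + 1, τ a = τ b → a = b := by
      refine ⟨by simp [hτ], ?_, ?_, ?_⟩
      · show τ j = y
        have hj0 : j ≠ 0 := by omega
        simp [hτ, hj0, hσy]
      · intro i hi
        by_cases hi0 : i = 0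
        · simp [hτ, hi0, hx]
        · simp only [hτ, hi0, if_false]
          exact hσmem _ (by omega)
      · intro a ha b hb hab
        by_cases ha0 : a = 0 <;> by_cases hb0 : b = 0
        · rw [ha0, hb0]
        · exfalso
          apply hxin (b - 1) (by omega)
          simp only [hτ, ha0, if_pos rfl, hb0, if_false] at hab
          exact hab.symm
        · exfalso
          apply hxin (a - 1) (by omega)
          simp only [hτ, ha0, hb0, if_false, if_pos rfl] at hab
          exact hab
        · simp only [hτ, ha0, hb0, if_false] at hab
          have := hσinj (a - 1) (by omega) (b - 1) (by omega) hab
          omega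
    have hcard : j + 1 ≤ C.card := by
      have hsub : insert x ((Finset.range j).image σ) ⊆ C := by
        intro z hz
        rcases Finset.mem_insert.mp hz with rfl | hz
        · exact hx
        · obtain ⟨i, hi, rfl⟩ := Finset.mem_image.mp hz
          exact hσmem i (Finset.mem_range.mp hi)
      have hxni : x ∉ (Finset.range j).image σ := by
        intro hmem
        obtain ⟨i, hi, he⟩ := Finset.mem_image.mp hmem
        exact hxin i (Finset.mem_range.mp hi) he
      have h1 : ((Finset.range j).image σ).card = j := by
        rw [Finset.card_image_of_injOn, Finset.card_range]
        intro a ha b hb hab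
        exact hσinj a (Finset.mem_range.mp (Finset.mem_coe.mp ha)) b
          (Finset.mem_range.mp (Finset.mem_coe.mp hb)) hab
      have := Finset.card_le_card hsub
      rw [Finset.card_insert_of_notMem hxni, h1] at this
      omega
    set S₂ : ℕ := G.dist x c + S with hS₂def
    have hsum : ∑ i ∈ Finset.range ((j + 1) - 1), G.dist (τ i) (τ (i + 1)) = S₂ := by
      have hjeq : (j + 1) - 1 = (j - 1) + 1 := by omega
      rw [hjeq, Finset.sum_range_succ']
      have h0 : G.dist (τ 0) (τ 1) = G.dist x c := by
        simp [hτ, hσ0]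
      have hterm : ∀ i, G.dist (τ (i + 1)) (τ (i + 1 + 1)) = G.dist (σ i) (σ (i + 1)) := by
        intro i
        simp [hτ]
      simp only [hterm, h0]
      rw [hS₂def, hSdef, add_comm]
    have hcoll : collDist G C (j + 1) x y ≤ (S₂ : ℕ∞) := by
      refine (collDist_le (j + 1) x y τ hprop).trans_eq ?_
      rw [← hsum]; push_cast; rfl
    exact final (j + 1) S₂ (by omega) hcard hcoll (by omega)

lemma rhoPrime2_le_step [DecidableEq V] (hG : G.Connected)
    (hsep : ∀ x ∈ C, ∀ y ∈ C, ¬ G.Adj x y)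
    {x c : V} (hx : x ∈ C) (hc : c ∈ C) (hcx : c ≠ x) {t : V} (hct : c ≠ t) :
    rhoPrime2 G C x t ≤ (G.dist x c : ℕ∞) - 2 + rhoStar G C c t := by
  rw [rhoStar, if_neg hct]
  rcases min_cases (rhoPrime G c t) (rhoPrime2 G C c t) with ⟨hmin, _⟩ | ⟨hmin, hlt⟩ <;>
    rw [hmin]
  · have hxc : x ≠ c := fun h => hcx h.symm
    have hcard2 : 2 ≤ C.card := by
      have := Finset.one_lt_card.mpr ⟨x, hx, c, hc, hxc⟩
      omega
    have hchain : collDist G C 2 x c ≤ (G.dist x c : ℕ∞) := by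
      have h := collDist_le (G := G) (C := C) 2 x c (fun i => if i = 0 then x else c)
        ⟨by simp, by simp, ?_, ?_⟩
      · simpa using h
      · intro i hi
        by_cases h0 : i = 0 <;> simp [h0, hx, hc]
      · intro a ha b hb hab
        interval_cases a <;> interval_cases b <;> simp_all
    calc rhoPrime2 G C x t
        ≤ collDist G C 2 x c - ((2 * (2 - 1) : ℕ) : ℕ∞) + rhoPrime G c t :=
          le_trans (iInf₂_le c hc) (iInf₂_le 2 (Finset.mem_Icc.mpr ⟨by norm_num, hcard2⟩))
      _ ≤ (G.dist x c : ℕ∞) - 2 + rhoPrime G c t := by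
          refine add_le_add_left ?_ _
          have : ((2 * (2 - 1) : ℕ) : ℕ∞) = 2 := by norm_num
          rw [this]
          exact tsub_le_tsub_right hchain _
  · have hfin : rhoPrime2 G C c t ≠ ⊤ := by
      intro h
      rw [h] at hlt
      exact (not_top_lt) hlt
    have h1 : rhoPrime2 G C c t < rhoPrime2 G C c t + 1 := (ENat.lt_add_one_iff hfin).mpr le_rfl
    obtain ⟨y, hy'⟩ := iInf_lt_iff.mp h1
    obtain ⟨hy, hy2⟩ := iInf_lt_iff.mp hy'
    obtain ⟨j, hj'⟩ := iInf_lt_iff.mp hy2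
    obtain ⟨hj, hj2⟩ := iInf_lt_iff.mp hj'
    have hT : collDist G C j c y - ((2 * (j - 1) : ℕ) : ℕ∞) + rhoPrime G y t ≤
        rhoPrime2 G C c t := (ENat.lt_add_one_iff hfin).mp hj2
    obtain ⟨hj1, hjcard⟩ := Finset.mem_Icc.mp hj
    exact le_trans (rhoPrime2_le_term hG hsep hx hc hcx t hy hj1 hjcard)
      (add_le_add_right hT _)

lemma enat_cancel2 {m X : ℕ∞} (h : m + 3 ≤ 2 + X) : m + 1 ≤ X := by
  have h2 : m + 3 - 2 ≤ X := tsub_le_iff_left.mpr h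
  have h3 : m + 1 + 2 - 2 = m + 1 := by
    cases m with
    | top => rfl
    | coe m => rfl
  have h4 : m + 3 = m + 1 + 2 := by ring
  rwa [h4, h3] at h2

end AuxLemmas

/-- Broadcasting strictly below `ρ*` necessarily causes a routing
cycle: if `β` agrees with `ρ*` except that `1 ≤ β x₀ t₀ < ρ*(x₀,t₀)` for some
colluder `x₀` and honest target `t₀`, then `β` is not admissible. -/
theorem below_rhoStar_not_admissible [Fintype V] [DecidableEq V] (G : SimpleGraph V)
    (hG : G.Connected) (hn : 2 ≤ Fintype.card V) (C : Finset V)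
    (hsep : ∀ x ∈ C, ∀ y ∈ C, ¬ G.Adj x y)
    (x₀ : V) (hx₀ : x₀ ∈ C) (t₀ : V) (ht₀ : t₀ ∉ C) (ht₀x : t₀ ≠ x₀)
    (β : V → V → ℕ∞)
    (hβ : ∀ x t : V, ¬(x = x₀ ∧ t = t₀) → β x t = rhoStar G C x t)
    (hβ1 : 1 ≤ β x₀ t₀) (hβlt : β x₀ t₀ < rhoStar G C x₀ t₀) :
    ¬ Admissible G C β := by
  intro hadm
  have hx₀t₀ : x₀ ≠ t₀ := ht₀x.symm
  have hstar : rhoStar G C x₀ t₀ = min (rhoPrime G x₀ t₀) (rhoPrime2 G C x₀ t₀) := by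
    rw [rhoStar, if_neg hx₀t₀]
  have hlt' : β x₀ t₀ < rhoPrime G x₀ t₀ :=
    hβlt.trans_le (by rw [hstar]; exact min_le_left _ _)
  have hlt'' : β x₀ t₀ < rhoPrime2 G C x₀ t₀ :=
    hβlt.trans_le (by rw [hstar]; exact min_le_right _ _)
  have hb : β x₀ t₀ + 3 ≤ (G.dist x₀ t₀ : ℕ∞) := by
    rw [rhoPrime] at hlt'
    rcases lt_max_iff.mp hlt' with h | h
    · have h2 : β x₀ t₀ + 2 < (G.dist x₀ t₀ : ℕ∞) := lt_tsub_iff_right.mp h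
      have h3 := Order.add_one_le_of_lt h2
      calc β x₀ t₀ + 3 = β x₀ t₀ + 2 + 1 := by ring
        _ ≤ _ := h3
    · exact absurd h (not_lt.mpr hβ1)
  have hmtop : β x₀ t₀ ≠ ⊤ :=
    ne_top_of_lt (lt_of_le_of_lt le_self_add (hb.trans_lt (ENat.coe_lt_top _)))
  have hkey : ∀ c ∈ C, c ≠ x₀ → β x₀ t₀ + 3 ≤ (G.dist x₀ c : ℕ∞) + rhoStar G C c t₀ := by
    intro c hc hcx
    have hct : c ≠ t₀ := fun h => ht₀ (h ▸ hc)
    have h2 := rhoPrime2_le_step hG hsep hx₀ hc hcx hct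
    have h3 : β x₀ t₀ + 1 ≤ (G.dist x₀ c : ℕ∞) - 2 + rhoStar G C c t₀ :=
      Order.add_one_le_of_lt (hlt''.trans_le h2)
    have hd2 : 2 ≤ G.dist x₀ c := two_le_dist_colluders hG hsep hx₀ hc (fun h => hcx h.symm)
    have h4 : ((G.dist x₀ c : ℕ∞) - 2) + 2 = (G.dist x₀ c : ℕ∞) := by
      refine tsub_add_cancel_of_le ?_
      exact_mod_cast Nat.cast_le.mpr hd2
    calc β x₀ t₀ + 3 = (β x₀ t₀ + 1) + 2 := by ring
      _ ≤ ((G.dist x₀ c : ℕ∞) - 2 + rhoStar G C c t₀) + 2 := add_le_add_left h3 2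
      _ = (((G.dist x₀ c : ℕ∞) - 2) + 2) + rhoStar G C c t₀ := by ring
      _ = _ := by rw [h4]
  have hrx₀ : rho G C β x₀ t₀ = β x₀ t₀ := perceived_colluder β _ hx₀ t₀
  have trap : ∀ w, w ≠ x₀ → G.dist x₀ w ≤ 2 → β x₀ t₀ + 1 ≤ rho G C β w t₀ := by
    intro w hwne hwd
    have hwd' : (G.dist x₀ w : ℕ∞) ≤ 2 := by exact_mod_cast Nat.cast_le.mpr hwd
    by_cases hwC : w ∈ C
    · rw [rho, perceived_colluder β _ hwC]
      have hβw : β w t₀ = rhoStar G C w t₀ := hβ w t₀ (fun h => hwne h.1)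
      rw [hβw]
      refine enat_cancel2 ((hkey w hwC hwne).trans ?_)
      exact add_le_add_left hwd' _
    · refine le_trans (le_min ?_ ?_) (perceived_lower hG β t₀ (Fintype.card V) w)
      · have htri : G.dist x₀ t₀ ≤ G.dist x₀ w + G.dist w t₀ := hG.dist_triangle
        have hstep : (G.dist x₀ t₀ : ℕ∞) ≤ 2 + (G.dist w t₀ : ℕ∞) := by
          calc (G.dist x₀ t₀ : ℕ∞) ≤ ((G.dist x₀ w + G.dist w t₀ : ℕ) : ℕ∞) :=
              Nat.cast_le.mpr htri
            _ = (G.dist x₀ w : ℕ∞) + (G.dist w t₀ : ℕ∞) := by push_cast; rfl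
            _ ≤ 2 + (G.dist w t₀ : ℕ∞) := add_le_add_left hwd' _
        exact enat_cancel2 (hb.trans hstep)
      · refine le_iInf₂ ?_
        intro c hc
        by_cases hcx : c = x₀
        · subst hcx
          have h1 : (1 : ℕ∞) ≤ (G.dist w c : ℕ∞) := by
            exact_mod_cast hG.pos_dist_of_ne hwne
          calc β c t₀ + 1 = 1 + β c t₀ := by ring
            _ ≤ (G.dist w c : ℕ∞) + β c t₀ := add_le_add_left h1 _
        · have hβc : β c t₀ = rhoStar G C c t₀ := hβ c t₀ (fun h => hcx h.1)
          rw [hβc]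
          have h3 := hkey c hc hcx
          have htri : G.dist x₀ c ≤ G.dist x₀ w + G.dist w c := hG.dist_triangle
          have h5 : (G.dist x₀ c : ℕ∞) ≤ 2 + (G.dist w c : ℕ∞) := by
            calc (G.dist x₀ c : ℕ∞) ≤ ((G.dist x₀ w + G.dist w c : ℕ) : ℕ∞) :=
                Nat.cast_le.mpr htri
              _ = (G.dist x₀ w : ℕ∞) + (G.dist w c : ℕ∞) := by push_cast; rfl
              _ ≤ 2 + (G.dist w c : ℕ∞) := add_le_add_left hwd' _
          refine enat_cancel2 (h3.trans ?_)
          calc (G.dist x₀ c : ℕ∞) + rhoStar G C c t₀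
              ≤ (2 + (G.dist w c : ℕ∞)) + rhoStar G C c t₀ := add_le_add_left h5 _
            _ = 2 + ((G.dist w c : ℕ∞) + rhoStar G C c t₀) := by ring
  obtain ⟨ℓ, v, hv0, hvl, hadjp, hfwd⟩ := hadm x₀ t₀ hx₀t₀
  have main : ∀ i, i ≤ ℓ → (Even i → v i = x₀) ∧ (¬ Even i → G.Adj x₀ (v i)) := by
    intro i
    induction i with
    | zero => exact fun _ => ⟨fun _ => hv0, fun h => absurd Even.zero h⟩
    | succ i IH =>
      intro hle
      have hilt : i < ℓ := hle
      have hi := IH hilt.le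
      by_cases hev : Even i
      · have hvi : v i = x₀ := hi.1 hev
        have hadj' := hadjp i hilt
        rw [hvi] at hadj'
        exact ⟨fun h => absurd hev (Nat.even_add_one.mp h), fun _ => hadj'⟩
      · have hAdjxi : G.Adj x₀ (v i) := hi.2 hev
        have hviC : v i ∉ C := fun hmem => hsep x₀ hx₀ (v i) hmem hAdjxi
        obtain ⟨hne_t, hadj2, hmin⟩ := hfwd i hilt hviC
        have h1 : rho G C β (v (i + 1)) t₀ ≤ β x₀ t₀ := by
          have := hmin x₀ hAdjxi.symm
          rwa [hrx₀] at this
        have hveq : v (i + 1) = x₀ := by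
          by_contra hne
          have hd : G.dist x₀ (v (i + 1)) ≤ 2 := by
            have t1 : G.dist x₀ (v i) = 1 := dist_eq_one_iff_adj.mpr hAdjxi
            have t2 : G.dist (v i) (v (i + 1)) = 1 := dist_eq_one_iff_adj.mpr (hadjp i hilt)
            have := hG.dist_triangle (u := x₀) (v := v i) (w := v (i + 1))
            omega
          have h6 : β x₀ t₀ + 1 ≤ β x₀ t₀ := (trap _ hne hd).trans h1
          have h7 : β x₀ t₀ < β x₀ t₀ + 1 := (ENat.lt_add_one_iff hmtop).mpr le_rfl
          exact absurd (h7.trans_le h6) (lt_irrefl _)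
        exact ⟨fun _ => hveq, fun hodd => absurd (Nat.even_add_one.mpr hev) hodd⟩
  obtain ⟨he, ho⟩ := main ℓ le_rfl
  by_cases hev : Even ℓ
  · exact ht₀x (by rw [← hvl, he hev])
  · have hadjl : G.Adj x₀ t₀ := hvl ▸ ho hev
    have hd1 : G.dist x₀ t₀ = 1 := dist_eq_one_iff_adj.mpr hadjl
    rw [hd1] at hb
    have h4 : (1 : ℕ∞) + 3 ≤ ((1 : ℕ) : ℕ∞) := le_trans (add_le_add_left hβ1 3) hb
    exact absurd h4 (by decide)



end Intercept
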